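/- Let {(U_n, V_n)} be a sequence of pairs of random variables with joint distributions on countable alphabets 𝒰_n × 𝒱_n. Suppose there is a sequence {Ψ_n} of possibly stochastic functions Ψ_n : 𝒱_n → 𝒰_n (i.e. random maps), each independent of (U_n, V_n), such that lim_{n→∞} P(Ψ_n(V_n) ≠ U_n) = 0. Then the spectral conditional sup-entropy rate satisfies H̄(U|V) = 0. -/

import Mathlib

attribute [local instance] Classical.propDecidable

open Filter

noncomputable section

/-- Probability of the event `E` under the joint pmf `μ n` of (U_n, V_n). -/
def Pr11 {U V : ℕ → Type*} (μ : ∀ n, U n × V n → ℝ) (n : ℕ) (E : Set (U n × V n)) : ℝ :=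
  ∑' x, if x ∈ E then μ n x else 0

/-- Marginal pmf of V_n. -/
def margV11 {U V : ℕ → Type*} (μ : ∀ n, U n × V n → ℝ) (n : ℕ) (v : V n) : ℝ :=
  ∑' u : U n, μ n (u, v)

/-- Spectral conditional sup-entropy rate H̄(U|V):
p-limsup (1/n) log₂ 1/μ_{U_n|V_n}(U_n|V_n), where
p-limsup A_n = inf {θ : lim P(A_n > θ) = 0}. -/
def Hbar11 {U V : ℕ → Type*} (μ : ∀ n, U n × V n → ℝ) : ℝ :=
  sInf {θ : ℝ | Tendsto (fun n => Pr11 μ n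
    {x | θ < (1 / (n : ℝ)) * Real.logb 2 (1 / (μ n x / margV11 μ n x.2))})
    atTop (nhds 0)}

/-- Error probability P(Ψ_n(V_n) ≠ U_n), where Ψ_n is a stochastic function with
distribution `ν n` on the set of functions 𝒱_n → 𝒰_n, independent of (U_n, V_n). -/
def errProb11 {U V : ℕ → Type*} (μ : ∀ n, U n × V n → ℝ)
    (ν : ∀ n, (V n → U n) → ℝ) (n : ℕ) : ℝ :=
  ∑' (x : U n × V n) (ψ : V n → U n), if ψ x.2 ≠ x.1 then μ n x * ν n ψ else 0

end

set_option maxHeartbeats 1000000 in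
/-- Core Fano-type bound for a single index. -/
lemma key11 {X Y : Type*} (p : X × Y → ℝ) (hp0 : ∀ x, 0 ≤ p x) (hp1 : HasSum p 1)
    (q : (Y → X) → ℝ) (hq0 : ∀ ψ, 0 ≤ q ψ) (hq1 : HasSum q 1)
    (c : ℝ) (hc : 0 ≤ c) (A : Set (X × Y))
    (hA : ∀ x ∈ A, p x ≤ c * ∑' u, p (u, x.2)) :
    (∑' x, if x ∈ A then p x else 0)
      ≤ (∑' (x : X × Y) (ψ : Y → X), if ψ x.2 ≠ x.1 then p x * q ψ else 0) + c := by
  classical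
  set marg : Y → ℝ := fun v => ∑' u, p (u, v) with hmarg_def
  have hps : Summable p := hp1.summable
  have hqs : Summable q := hq1.summable
  have hswap : HasSum (fun z : Y × X => p (z.2, z.1)) 1 :=
    ((Equiv.prodComm Y X).hasSum_iff).mpr hp1
  have hfib : ∀ v, Summable fun u => p (u, v) := fun v => hswap.summable.prod_factor v
  have hmarg : HasSum marg 1 := hswap.prod_fiberwise fun v => (hfib v).hasSum
  have hmarg0 : ∀ v, 0 ≤ marg v := fun v => tsum_nonneg fun u => hp0 _
  -- indicator of A
  set fA : X × Y → ℝ := fun x => if x ∈ A then p x else 0 with hfA_def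
  have hfA0 : ∀ x, 0 ≤ fA x := fun x => by
    by_cases h : x ∈ A <;> simp [fA, h, hp0]
  have hfAle : ∀ x, fA x ≤ p x := fun x => by
    by_cases h : x ∈ A <;> simp [fA, h, hp0]
  have hfAs : Summable fA := Summable.of_nonneg_of_le hfA0 hfAle hps
  set PrA : ℝ := ∑' x, fA x with hPrA_def
  -- error and miss terms
  set e : (Y → X) → X × Y → ℝ := fun ψ x => if ψ x.2 ≠ x.1 then p x * q ψ else 0 with he_def
  set m : (Y → X) → X × Y → ℝ := fun ψ x => if ψ x.2 = x.1 then q ψ * (c * marg x.2) else 0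
    with hm_def
  have he0 : ∀ ψ x, 0 ≤ e ψ x := fun ψ x => by
    by_cases h : ψ x.2 = x.1 <;> simp [e, h, mul_nonneg (hp0 _) (hq0 _)]
  have hele : ∀ ψ x, e ψ x ≤ p x * q ψ := fun ψ x => by
    by_cases h : ψ x.2 = x.1 <;> simp [e, h, mul_nonneg (hp0 _) (hq0 _)]
  have hm0 : ∀ ψ x, 0 ≤ m ψ x := fun ψ x => by
    by_cases h : ψ x.2 = x.1 <;>
      simp [m, h, mul_nonneg (hq0 _) (mul_nonneg hc (hmarg0 _))]
  -- summabilities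
  have hjoint : Summable fun z : (X × Y) × (Y → X) => p z.1 * q z.2 :=
    hps.mul_of_nonneg hqs hp0 hq0
  have hE2 : Summable fun z : (Y → X) × (X × Y) => e z.1 z.2 :=
    Summable.of_nonneg_of_le (fun z => he0 _ _) (fun z => hele _ _) hjoint.prod_symm
  have hefib : ∀ ψ, Summable fun x => e ψ x := fun ψ => hE2.prod_factor ψ
  have hefib2 : ∀ x, Summable fun ψ => e ψ x := fun x => hE2.prod_symm.prod_factor x
  -- graph injection for the miss term
  have hg_inj : ∀ ψ : Y → X, Function.Injective (fun v => ((ψ v, v) : X × Y)) :=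
    fun ψ a b h => congrArg Prod.snd h
  have hm_supp : ∀ ψ, Function.support (m ψ) ⊆ Set.range (fun v => ((ψ v, v) : X × Y)) := by
    intro ψ x hx
    have h1 : ψ x.2 = x.1 := by
      by_contra h
      exact hx (by simp [m, h])
    exact ⟨x.2, by simp [h1]⟩
  have hmcomp : ∀ ψ : Y → X, (fun v => m ψ (ψ v, v)) = fun v => q ψ * (c * marg v) := by
    intro ψ; funext v; simp [m]
  have hm_zero : ∀ ψ : Y → X, ∀ x ∉ Set.range (fun v => ((ψ v, v) : X × Y)), m ψ x = 0 := by
    intro ψ x hx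
    by_cases h : ψ x.2 = x.1
    · exact absurd (⟨x.2, by simp [h]⟩ : x ∈ Set.range (fun v => ((ψ v, v) : X × Y))) hx
    · simp [m, h]
  have hmfib : ∀ ψ, Summable fun x => m ψ x := by
    intro ψ
    refine ((hg_inj ψ).summable_iff (hm_zero ψ)).mp ?_
    rw [show ((m ψ) ∘ fun v => ((ψ v, v) : X × Y)) = fun v => q ψ * (c * marg v) from
      hmcomp ψ]
    simpa [mul_assoc] using hmarg.summable.mul_left (q ψ * c)
  have hmsum : ∀ ψ, (∑' x, m ψ x) = q ψ * c := by
    intro ψ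
    have := (hg_inj ψ).tsum_eq (f := m ψ) (hm_supp ψ)
    rw [← this]
    calc (∑' v, m ψ (ψ v, v)) = ∑' v, q ψ * (c * marg v) := by
          exact tsum_congr fun v => by simp [m]
      _ = q ψ * (c * ∑' v, marg v) := by
          rw [tsum_mul_left, tsum_mul_left]
      _ = q ψ * c := by rw [hmarg.tsum_eq, mul_one]
  -- pointwise bound
  have hpt : ∀ ψ x, q ψ * fA x ≤ e ψ x + m ψ x := by
    intro ψ x
    by_cases h : ψ x.2 = x.1
    · by_cases hxA : x ∈ A
      · have h1 : e ψ x = 0 := by simp [e, h]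
        have h2 : m ψ x = q ψ * (c * marg x.2) := by simp [m, h]
        have h3 : fA x = p x := by simp [fA, hxA]
        rw [h1, h2, h3, zero_add]
        exact mul_le_mul_of_nonneg_left (hA x hxA) (hq0 ψ)
      · have : q ψ * fA x = 0 := by simp [fA, hxA]
        rw [this]
        exact add_nonneg (he0 ψ x) (hm0 ψ x)
    · have h1 : e ψ x = p x * q ψ := by simp [e, h]
      have h2 : m ψ x = 0 := by simp [m, h]
      rw [h1, h2, add_zero, mul_comm (p x)]
      exact mul_le_mul_of_nonneg_left (hfAle x) (hq0 ψ)
  -- per-ψ bound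
  have hψ : ∀ ψ, q ψ * PrA ≤ (∑' x, e ψ x) + q ψ * c := by
    intro ψ
    have h1 : q ψ * PrA = ∑' x, q ψ * fA x := (tsum_mul_left).symm
    rw [h1, ← hmsum ψ]
    have hsum : Summable fun x => e ψ x + m ψ x := (hefib ψ).add (hmfib ψ)
    calc (∑' x, q ψ * fA x) ≤ ∑' x, (e ψ x + m ψ x) := by
          refine Summable.tsum_le_tsum (fun x => hpt ψ x) ?_ hsum
          exact hfAs.mul_left _
      _ = (∑' x, e ψ x) + ∑' x, m ψ x := Summable.tsum_add (hefib ψ) (hmfib ψ)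
  -- sum over ψ
  have hEsum : HasSum (fun ψ => ∑' x, e ψ x) (∑' z : (Y → X) × (X × Y), e z.1 z.2) :=
    hE2.hasSum.prod_fiberwise fun ψ => (hefib ψ).hasSum
  have hPrA : PrA = ∑' ψ, q ψ * PrA := by
    rw [tsum_mul_right, hq1.tsum_eq, one_mul]
  have hstep : PrA ≤ (∑' ψ, ∑' x, e ψ x) + c := by
    rw [hPrA]
    calc (∑' ψ, q ψ * PrA) ≤ ∑' ψ, ((∑' x, e ψ x) + q ψ * c) := by
          refine Summable.tsum_le_tsum hψ (hqs.mul_right _) ?_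
          exact hEsum.summable.add (hqs.mul_right _)
      _ = (∑' ψ, ∑' x, e ψ x) + ∑' ψ, q ψ * c :=
          Summable.tsum_add hEsum.summable (hqs.mul_right _)
      _ = (∑' ψ, ∑' x, e ψ x) + c := by rw [tsum_mul_right, hq1.tsum_eq, one_mul]
  have hcomm : (∑' ψ, ∑' x, e ψ x) = ∑' (x : X × Y) (ψ : Y → X), e ψ x := by
    exact Summable.tsum_comm' (f := fun (x : X × Y) (ψ : Y → X) => e ψ x) hE2.prod_symm hefib2 hefib
  rw [hcomm] at hstep
  exact hstep

/-- Fano-type lemma: if there are stochastic functions Ψ_n, independent of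
(U_n, V_n), with P(Ψ_n(V_n) ≠ U_n) → 0, then H̄(U|V) = 0. -/
theorem stmt11 {U V : ℕ → Type*} [∀ n, Countable (U n)] [∀ n, Countable (V n)]
    (μ : ∀ n, U n × V n → ℝ)
    (hμ0 : ∀ n x, 0 ≤ μ n x) (hμ1 : ∀ n, HasSum (μ n) 1)
    (ν : ∀ n, (V n → U n) → ℝ)
    (hν0 : ∀ n ψ, 0 ≤ ν n ψ) (hν1 : ∀ n, HasSum (ν n) 1)
    (herr : Tendsto (errProb11 μ ν) atTop (nhds 0)) :
    Hbar11 μ = 0 := by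
  classical
  set S : Set ℝ := {θ : ℝ | Tendsto (fun n => Pr11 μ n
    {x | θ < (1 / (n : ℝ)) * Real.logb 2 (1 / (μ n x / margV11 μ n x.2))})
    atTop (nhds 0)} with hS_def
  have hfib : ∀ n v, Summable fun u => μ n (u, v) := by
    intro n v
    have hswap : HasSum (fun z : V n × U n => μ n (z.2, z.1)) 1 :=
      ((Equiv.prodComm (V n) (U n)).hasSum_iff).mpr (hμ1 n)
    exact hswap.summable.prod_factor v
  have hmarg0 : ∀ n v, 0 ≤ margV11 μ n v := fun n v => tsum_nonneg fun u => hμ0 n _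
  have hple : ∀ n (x : U n × V n), μ n x ≤ margV11 μ n x.2 := by
    intro n x
    have := Summable.le_tsum (hfib n x.2) x.1 (fun u _ => hμ0 n _)
    simpa [margV11] using this
  -- the random variable is always nonnegative
  have hval0 : ∀ n (x : U n × V n),
      0 ≤ (1 / (n : ℝ)) * Real.logb 2 (1 / (μ n x / margV11 μ n x.2)) := by
    intro n x
    apply mul_nonneg (by positivity)
    set r : ℝ := μ n x / margV11 μ n x.2 with hr_def
    have hr0 : 0 ≤ r := div_nonneg (hμ0 n x) (hmarg0 n x.2)
    rcases eq_or_lt_of_le hr0 with h | h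
    · rw [← h]
      simp
    · have hr1 : r ≤ 1 := by
        rcases eq_or_lt_of_le (hmarg0 n x.2) with hm | hm
        · rw [hr_def, ← hm, div_zero] at h
          exact absurd h (lt_irrefl 0)
        · rw [hr_def, div_le_one hm]
          exact hple n x
      rw [one_div]
      exact Real.logb_nonneg one_lt_two (one_le_inv_iff₀.mpr ⟨h, hr1⟩)
  -- every θ ∈ S is nonnegative
  have hS_nonneg : ∀ θ ∈ S, 0 ≤ θ := by
    intro θ hθ
    by_contra hneg
    push_neg at hneg
    have hall : ∀ n, Pr11 μ n
        {x | θ < (1 / (n : ℝ)) * Real.logb 2 (1 / (μ n x / margV11 μ n x.2))} = 1 := by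
      intro n
      have : (fun x : U n × V n => if x ∈
          {x | θ < (1 / (n : ℝ)) * Real.logb 2 (1 / (μ n x / margV11 μ n x.2))}
          then μ n x else 0) = μ n := by
        funext x
        rw [if_pos]
        exact lt_of_lt_of_le hneg (hval0 n x)
      rw [Pr11, this, (hμ1 n).tsum_eq]
    have : Tendsto (fun _ : ℕ => (1 : ℝ)) atTop (nhds 0) := by
      have := hθ
      simp only [hS_def, Set.mem_setOf_eq] at this
      simpa only [hall] using this
    exact one_ne_zero (tendsto_nhds_unique tendsto_const_nhds this)
  -- every positive θ is in S
  have hS_mem : ∀ θ : ℝ, 0 < θ → θ ∈ S := by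
    intro θ hθ
    set r : ℝ := (2 : ℝ) ^ (-θ) with hr_def
    have hr0 : 0 ≤ r := Real.rpow_nonneg (by norm_num) _
    have hr1 : r < 1 := Real.rpow_lt_one_of_one_lt_of_neg one_lt_two (by linarith)
    have hbound : ∀ n, Pr11 μ n
        {x | θ < (1 / (n : ℝ)) * Real.logb 2 (1 / (μ n x / margV11 μ n x.2))}
        ≤ errProb11 μ ν n + r ^ n := by
      intro n
      apply key11 (μ n) (hμ0 n) (hμ1 n) (ν n) (hν0 n) (hν1 n) (r ^ n) (pow_nonneg hr0 n)
      intro x hx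
      simp only [Set.mem_setOf_eq] at hx
      -- n must be positive
      rcases Nat.eq_zero_or_pos n with hn | hn
      · exfalso
        have h0 : ((n : ℝ)) = 0 := by simp [hn]
        rw [h0] at hx
        norm_num at hx
        linarith
      have hnR : (0 : ℝ) < (n : ℝ) := Nat.cast_pos.mpr hn
      have hL : 0 < Real.logb 2 (1 / (μ n x / margV11 μ n x.2)) := by
        by_contra hL
        push_neg at hL
        have h1 : (1 / (n : ℝ)) * Real.logb 2 (1 / (μ n x / margV11 μ n x.2)) ≤ 0 :=
          mul_nonpos_of_nonneg_of_nonpos (by positivity) hL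
        linarith
      have hra0 : 0 ≤ μ n x / margV11 μ n x.2 :=
        div_nonneg (hμ0 n x) (hmarg0 n x.2)
      have hra_pos : 0 < μ n x / margV11 μ n x.2 := by
        rcases eq_or_lt_of_le hra0 with h | h
        · rw [← h] at hL
          simp at hL
        · exact h
      have hmg_pos : 0 < margV11 μ n x.2 := by
        rcases eq_or_lt_of_le (hmarg0 n x.2) with h | h
        · rw [← h, div_zero] at hra_pos
          exact absurd hra_pos (lt_irrefl 0)
        · exact h
      -- θ * n < logb 2 (1/ra)
      have h2 : θ * (n : ℝ) < Real.logb 2 (1 / (μ n x / margV11 μ n x.2)) := by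
        rw [one_div_mul_eq_div, lt_div_iff₀ hnR] at hx
        exact hx
      have h3 : (2 : ℝ) ^ (θ * (n : ℝ)) < 1 / (μ n x / margV11 μ n x.2) :=
        (Real.lt_logb_iff_rpow_lt one_lt_two (by positivity)).mp h2
      have h4 : μ n x / margV11 μ n x.2 < ((2 : ℝ) ^ (θ * (n : ℝ)))⁻¹ := by
        rw [one_div] at h3
        exact (lt_inv_comm₀ (Real.rpow_pos_of_pos two_pos _) hra_pos).mp h3
      have h5 : ((2 : ℝ) ^ (θ * (n : ℝ)))⁻¹ = r ^ n := by
        rw [hr_def, ← Real.rpow_natCast ((2:ℝ) ^ (-θ)) n, ← Real.rpow_mul (by norm_num),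
          ← Real.rpow_neg_one ((2:ℝ) ^ (θ * (n:ℝ))), ← Real.rpow_mul (by norm_num)]
        ring_nf
      rw [h5] at h4
      have h6 : μ n x = (μ n x / margV11 μ n x.2) * margV11 μ n x.2 :=
        (div_mul_cancel₀ (μ n x) (ne_of_gt hmg_pos)).symm
      calc μ n x = (μ n x / margV11 μ n x.2) * margV11 μ n x.2 := h6
        _ ≤ r ^ n * margV11 μ n x.2 :=
            mul_le_mul_of_nonneg_right (le_of_lt h4) (le_of_lt hmg_pos)
    have htend : Tendsto (fun n => errProb11 μ ν n + r ^ n) atTop (nhds 0) := by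
      have := herr.add (tendsto_pow_atTop_nhds_zero_of_lt_one hr0 hr1)
      simpa using this
    have hPr0 : ∀ n (E : Set (U n × V n)), 0 ≤ Pr11 μ n E := by
      intro n E
      refine tsum_nonneg fun x => ?_
      by_cases h : x ∈ E <;> simp [Pr11, h, hμ0 n x]
    exact squeeze_zero (fun n => hPr0 n _) hbound htend
  -- conclude
  have hne : S.Nonempty := ⟨1, hS_mem 1 one_pos⟩
  have hbdd : BddBelow S := ⟨0, fun θ hθ => hS_nonneg θ hθ⟩
  have h1 : Hbar11 μ = sInf S := rfl
  rw [h1]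
  apply le_antisymm
  · refine le_of_forall_pos_le_add fun ε hε => ?_
    have := csInf_le hbdd (hS_mem ε hε)
    linarith
  · exact le_csInf hne fun θ hθ => hS_nonneg θ hθ
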